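/- Let B be a skew brace of nilpotent type (i.e. (B,+) is nilpotent, of class m) such that B³ = 0. If B^{(k)} is contained in the centre of the multiplicative group (B,·) for some k ≥ 2, then B^{(k+m+1)} = 0. In particular, if B^{(2)} ⊆ Z(B,·), then B^{(2+m+1)} = 0. -/

import Mathlib

/-- A (left) skew brace: a set with two group structures `(B,+)` and `(B,·)`
satisfying `a·(b+c) = a·b - a + a·c`. -/
class SkewBrace (B : Type*) extends AddGroup B, Group B where
  mul_add_compat : ∀ a b c : B, a * (b + c) = a * b - a + a * c

namespace SkewBrace

variable {B : Type*} [SkewBrace B]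

/-- The star product `a ∗ b = -a + a·b - b`. -/
def star (a b : B) : B := -a + a * b - b

/-- For subsets `X, Y ⊆ B`, `X ∗ Y` is the additive subgroup generated by
all `x ∗ y` with `x ∈ X`, `y ∈ Y`. -/
def starSet (X Y : Set B) : AddSubgroup B :=
  AddSubgroup.closure (Set.image2 star X Y)

/-- The left series, indexed so that `leftSeries B n = B^{n+1}`:
`leftSeries B 0 = B¹ = B` and `leftSeries B (n+1) = B ∗ leftSeries B n`. -/
def leftSeries (B : Type*) [SkewBrace B] : ℕ → AddSubgroup B
  | 0 => ⊤
  | n + 1 => starSet Set.univ (leftSeries B n)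

/-- The right series, indexed so that `rightSeries B n = B^{(n+1)}`:
`rightSeries B 0 = B^{(1)} = B` and `rightSeries B (n+1) = (rightSeries B n) ∗ B`. -/
def rightSeries (B : Type*) [SkewBrace B] : ℕ → AddSubgroup B
  | 0 => ⊤
  | n + 1 => starSet (rightSeries B n : Set B) Set.univ

lemma mul_zero' (a : B) : a * (0 : B) = a := by
  have h := mul_add_compat a 0 0
  rw [add_zero] at h
  have h2 : a * 0 - a + a * 0 = 0 + a * 0 := by rw [zero_add, ← h]
  have h3 := add_right_cancel h2
  exact sub_eq_zero.mp h3

lemma zero_eq_one : (0 : B) = 1 := by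
  have := mul_zero' (1 : B)
  rwa [one_mul] at this

lemma star_zero_left (b : B) : star (0 : B) b = 0 := by
  have h : (0 : B) * b = b := by rw [zero_eq_one, one_mul]
  rw [star, h, neg_zero, zero_add, sub_self]

lemma rightSeries_succ_le (n : ℕ) : rightSeries B (n + 1) ≤ rightSeries B n := by
  induction n with
  | zero => exact le_top
  | succ n ih =>
    rw [show rightSeries B (n + 1 + 1) = starSet (↑(rightSeries B (n + 1))) Set.univ from rfl,
        show rightSeries B (n + 1) = starSet (↑(rightSeries B n)) Set.univ from rfl]
    exact AddSubgroup.closure_mono (Set.image2_subset (fun x hx => ih hx) Set.Subset.rfl)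

lemma rightSeries_antitone : Antitone (rightSeries B) :=
  antitone_nat_of_succ_le rightSeries_succ_le

lemma rightSeries_one_eq : rightSeries B 1 = leftSeries B 1 := by
  rw [show rightSeries B 1 = starSet (↑(⊤ : AddSubgroup B)) Set.univ from rfl,
      show leftSeries B 1 = starSet Set.univ ↑(⊤ : AddSubgroup B) from rfl,
      AddSubgroup.coe_top]

/-- Preimage of a subgroup of `Multiplicative B` as an additive subgroup of `B`. -/
def mker {A : Type*} [AddGroup A] (S : Subgroup (Multiplicative A)) : AddSubgroup A where
  carrier := {x | Multiplicative.ofAdd x ∈ S}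
  zero_mem' := by simpa using S.one_mem
  add_mem' := by
    intro a b ha hb
    exact S.mul_mem ha hb
  neg_mem' := by
    intro a ha
    exact S.inv_mem ha

end SkewBrace

open SkewBrace in
/-- If `B` is of nilpotent type with `(B,+)` of class `m`, `B³ = 0`, and
`B^{(k)} ⊆ Z(B,·)` for some `k ≥ 2`, then `B^{(k+m+1)} = 0`.
(`rightSeries B n = B^{(n+1)}`, so `B^{(k)} = rightSeries B (k-1)` and
`B^{(k+m+1)} = rightSeries B (k+m)`.) -/
theorem right_nilpotent_of_rightSeries_central (B : Type*) [SkewBrace B] (m k : ℕ)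
    [Group.IsNilpotent (Multiplicative B)]
    (hm : Group.nilpotencyClass (Multiplicative B) = m)
    (h3 : leftSeries B 2 = ⊥)
    (hk : 2 ≤ k)
    (hcentral : ∀ x ∈ rightSeries B (k - 1), x ∈ Subgroup.center B) :
    rightSeries B (k + m) = ⊥ := by
  -- every element of B² is killed by star on the left
  have hstar2 : ∀ (b x : B), x ∈ leftSeries B 1 → star b x = 0 := by
    intro b x hx
    have hmem : star b x ∈ leftSeries B 2 := by
      rw [show leftSeries B 2 = starSet Set.univ ↑(leftSeries B 1) from rfl]
      exact AddSubgroup.subset_closure (Set.mem_image2_of_mem (Set.mem_univ b) hx)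
    rw [h3] at hmem
    exact AddSubgroup.mem_bot.mp hmem
  -- key induction
  have key : ∀ j, ∀ x ∈ rightSeries B (k - 1 + j),
      Multiplicative.ofAdd x ∈ Subgroup.lowerCentralSeries (⊤ : Subgroup (Multiplicative B)) j := by
    intro j
    induction j with
    | zero =>
      intro x _
      rw [lowerCentralSeries_zero]
      exact Subgroup.mem_top _
    | succ j ih =>
      have hle : rightSeries B (k - 1 + (j + 1)) ≤
          mker (Subgroup.lowerCentralSeries (⊤ : Subgroup (Multiplicative B)) (j + 1)) := by
        rw [show rightSeries B (k - 1 + (j + 1))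
              = starSet (↑(rightSeries B (k - 1 + j))) Set.univ from rfl]
        refine (AddSubgroup.closure_le _).2 ?_
        rintro z ⟨x, hx, b, -, rfl⟩
        have hxk : x ∈ rightSeries B (k - 1) :=
          rightSeries_antitone (B := B) (Nat.le_add_right _ _) hx
        have hxc : x ∈ Subgroup.center B := hcentral x hxk
        have hx2 : x ∈ leftSeries B 1 := by
          have h1 : (1 : ℕ) ≤ k - 1 + j := by omega
          exact rightSeries_one_eq (B := B) ▸ (rightSeries_antitone (B := B) h1 hx)
        have hbx0 : star b x = 0 := hstar2 b x hx2
        have h2 : -b + b * x = x := by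
          have h1 : -b + b * x - x = 0 := hbx0
          exact sub_eq_zero.mp h1
        have hmul : b * x = b + x := by
          calc b * x = b + (-b + b * x) := (add_neg_cancel_left b (b * x)).symm
            _ = b + x := by rw [h2]
        have hxb : x * b = b + x := by
          rw [← Subgroup.mem_center_iff.mp hxc b, hmul]
        have hform : star x b = -x + b + x - b := by
          rw [SkewBrace.star, hxb]
          simp [sub_eq_add_neg, add_assoc]
        show Multiplicative.ofAdd (star x b) ∈
          Subgroup.lowerCentralSeries (⊤ : Subgroup (Multiplicative B)) (j + 1)
        open scoped commutatorElement in
        have hc : Multiplicative.ofAdd (star x b) =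
            ⁅(Multiplicative.ofAdd x)⁻¹, Multiplicative.ofAdd b⁆ := by
          rw [hform]
          simp [commutatorElement_def, sub_eq_add_neg, mul_assoc]
        rw [hc, lowerCentralSeries_succ]
        have hxl : Multiplicative.ofAdd x ∈ Subgroup.lowerCentralSeries (⊤ : Subgroup (Multiplicative B)) j :=
          ih x hx
        exact Subgroup.commutator_mem_commutator
          ((Subgroup.lowerCentralSeries (⊤ : Subgroup (Multiplicative B)) j).inv_mem hxl) (Subgroup.mem_top _)
      exact fun x hx => hle hx
  -- B^{(k+m)} = 0
  have hbotm : rightSeries B (k - 1 + m) = ⊥ := by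
    refine le_bot_iff.mp ?_
    intro x hx
    have hx' := key m x hx
    rw [← hm, lowerCentralSeries_nilpotencyClass] at hx'
    have : Multiplicative.ofAdd x = 1 := Subgroup.mem_bot.mp hx'
    have hx0 : x = 0 := by simpa using this
    simp [hx0]
  -- one more star step keeps it at ⊥
  have hsucc : rightSeries B (k - 1 + m + 1) = ⊥ := by
    refine le_bot_iff.mp ?_
    rw [show rightSeries B (k - 1 + m + 1)
          = starSet (↑(rightSeries B (k - 1 + m))) Set.univ from rfl]
    refine (AddSubgroup.closure_le _).2 ?_
    rintro z ⟨x, hx, b, -, rfl⟩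
    rw [hbotm] at hx
    have hx0 : x = 0 := AddSubgroup.mem_bot.mp hx
    subst hx0
    rw [SkewBrace.star_zero_left]
    exact (⊥ : AddSubgroup B).zero_mem
  have heq : k + m = k - 1 + m + 1 := by omega
  rw [heq, hsucc]
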